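/- Let ψ1 = (φ1,υ1) and ψ2 = (φ2,υ2) be solution pairs to a hybrid system H = (C,f,D,g) with dom ψ1 compact. Then the concatenation ψ = (φ,υ) = (φ1|φ2, υ1|υ2) satisfies: for each j ∈ ℕ such that I^j_ψ := {t : (t,j) ∈ dom ψ} has nonempty interior, (d/dt)φ(t,j) = f(φ(t,j),υ(t,j)) for almost all t ∈ I^j_ψ. -/

import Mathlib

open MeasureTheory Set Metric

noncomputable section

/-- A hybrid time domain: a subset of `ℝ≥0 × ℕ` such that, for each `(T, J)` in it,
its intersection with `[0,T] × {0,…,J}` is a finite union `⋃_{j=0}^{J} [t_j, t_{j+1}] × {j}`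
for some nondecreasing finite sequence `0 = t_0 ≤ t_1 ≤ ⋯ ≤ t_{J+1} = T`. -/
def IsHybridTimeDomain (E : Set (ℝ × ℕ)) : Prop :=
  (∀ p ∈ E, 0 ≤ p.1) ∧
  ∀ p ∈ E, ∃ t : ℕ → ℝ, t 0 = 0 ∧ t (p.2 + 1) = p.1 ∧
    (∀ j, j ≤ p.2 → t j ≤ t (j + 1)) ∧
    E ∩ (Set.Icc (0 : ℝ) p.1 ×ˢ {j : ℕ | j ≤ p.2}) =
      ⋃ j ∈ Set.Iic p.2, Set.Icc (t j) (t (j + 1)) ×ˢ ({j} : Set ℕ)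

/-- `(T, J)` is the maximal element of the hybrid time domain `E`. -/
def IsMaxOfDomain (E : Set (ℝ × ℕ)) (T : ℝ) (J : ℕ) : Prop :=
  (T, J) ∈ E ∧ ∀ p ∈ E, p.1 ≤ T ∧ p.2 ≤ J

/-- The domain of the concatenation: `E1 ∪ (E2 + {(T, J)})` (Minkowski sum). -/
def ConcatDom (T : ℝ) (J : ℕ) (E1 E2 : Set (ℝ × ℕ)) : Set (ℝ × ℕ) :=
  E1 ∪ (fun p : ℝ × ℕ => (p.1 + T, p.2 + J)) '' E2

/-- `f` is the concatenation of `f2` to `f1` (with `(T, J) = max dom f1`):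
`f = f1` on `E1 \ {(T,J)}`, and `f (t + T, j + J) = f2 (t, j)` on `E2`. -/
def IsConcatOf {Y : Type*} (T : ℝ) (J : ℕ) (E1 E2 : Set (ℝ × ℕ))
    (f1 f2 f : ℝ × ℕ → Y) : Prop :=
  (∀ p ∈ E1, p ≠ (T, J) → f p = f1 p) ∧
  (∀ p ∈ E2, f (p.1 + T, p.2 + J) = f2 p)

/-- The `j`-th time slice `I^j_E = {t : (t, j) ∈ E}` of a hybrid time domain. -/
def Slice (E : Set (ℝ × ℕ)) (j : ℕ) : Set ℝ := {t : ℝ | (t, j) ∈ E}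

/-- `t ↦ υ (t, j)` is (Lebesgue) measurable on the slice `I^j_E`. -/
def MeasurableOnSlice {Y : Type*} [MeasurableSpace Y]
    (υ : ℝ × ℕ → Y) (E : Set (ℝ × ℕ)) (j : ℕ) : Prop :=
  Measurable ((Slice E j).restrict fun t => υ (t, j))

/-- `t ↦ υ (t, j)` is locally essentially bounded on the slice `I^j_E`: every point of the
slice has an open neighborhood on which the function is bounded almost everywhere. -/
def LocEssBddOnSlice {Y : Type*} [NormedAddCommGroup Y]
    (υ : ℝ × ℕ → Y) (E : Set (ℝ × ℕ)) (j : ℕ) : Prop :=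
  ∀ r ∈ Slice E j, ∃ U : Set ℝ, IsOpen U ∧ r ∈ U ∧ ∃ c : ℝ, 0 ≤ c ∧
    ∀ᵐ t ∂(volume : Measure ℝ), t ∈ U ∩ Slice E j → ‖υ (t, j)‖ ≤ c

/-- A hybrid input: defined on a hybrid time domain, with each slice function Lebesgue
measurable and locally essentially bounded. -/
def IsHybridInput {Y : Type*} [MeasurableSpace Y] [NormedAddCommGroup Y]
    (υ : ℝ × ℕ → Y) (E : Set (ℝ × ℕ)) : Prop :=
  IsHybridTimeDomain E ∧
  ∀ j : ℕ, MeasurableOnSlice υ E j ∧ LocEssBddOnSlice υ E j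

/-- `f` is absolutely continuous on `[a, b]` in the ε–δ sense: for every `ε > 0` there is
`δ > 0` such that every countable collection of disjoint subintervals `[u k, v k]` of `[a,b]`
of total length at most `δ` satisfies `Σ ‖f (v k) - f (u k)‖ ≤ ε`. -/
def AbsContOnIcc {Y : Type*} [NormedAddCommGroup Y] (f : ℝ → Y) (a b : ℝ) : Prop :=
  ∀ ε > (0 : ℝ), ∃ δ > (0 : ℝ), ∀ u v : ℕ → ℝ,
    (∀ k, a ≤ u k ∧ u k ≤ v k ∧ v k ≤ b) →
    (Pairwise fun k l => Disjoint (Set.Ioo (u k) (v k)) (Set.Ioo (u l) (v l))) →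
    (∀ s : Finset ℕ, ∑ k ∈ s, (v k - u k) ≤ δ) →
    ∀ s : Finset ℕ, ∑ k ∈ s, ‖f (v k) - f (u k)‖ ≤ ε

/-- `f` is locally absolutely continuous on the set `I`: it is absolutely continuous on
every compact subinterval of `I`. -/
def LocAbsContOn {Y : Type*} [NormedAddCommGroup Y] (f : ℝ → Y) (I : Set ℝ) : Prop :=
  ∀ a b : ℝ, a ≤ b → Set.Icc a b ⊆ I → AbsContOnIcc f a b

/-- A hybrid arc: defined on a hybrid time domain, with each slice function locally
absolutely continuous. -/
def IsHybridArc {Y : Type*} [NormedAddCommGroup Y]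
    (φ : ℝ × ℕ → Y) (E : Set (ℝ × ℕ)) : Prop :=
  IsHybridTimeDomain E ∧
  ∀ j : ℕ, LocAbsContOn (fun t => φ (t, j)) (Slice E j)

/-- `(φ, υ)` with common domain `E` is a solution pair to the hybrid system
`H = (C, f, D, g)`. -/
def IsSolutionPair {X U : Type*} [NormedAddCommGroup X] [NormedSpace ℝ X]
    [NormedAddCommGroup U] [MeasurableSpace U]
    (C : Set (X × U)) (f : X × U → X) (D : Set (X × U)) (g : X × U → X)
    (φ : ℝ × ℕ → X) (υ : ℝ × ℕ → U) (E : Set (ℝ × ℕ)) : Prop :=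
  IsHybridArc φ E ∧ IsHybridInput υ E ∧
  (φ (0, 0), υ (0, 0)) ∈ closure C ∪ D ∧
  (∀ j : ℕ, (interior (Slice E j)).Nonempty →
    (∀ t ∈ interior (Slice E j), (φ (t, j), υ (t, j)) ∈ C) ∧
    ∀ᵐ t ∂(volume : Measure ℝ), t ∈ Slice E j →
      HasDerivAt (fun s => φ (s, j)) (f (φ (t, j), υ (t, j))) t) ∧
  ∀ (t : ℝ) (j : ℕ), (t, j) ∈ E → (t, j + 1) ∈ E →
    (φ (t, j), υ (t, j)) ∈ D ∧ φ (t, j + 1) = g (φ (t, j), υ (t, j))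

/-- `(φ, υ)` with domain `E` is a motion plan to the motion planning problem
`P = (X0, Xf, Xu, (C, f, D, g))`. -/
def IsMotionPlan {X U : Type*} [NormedAddCommGroup X] [NormedSpace ℝ X]
    [NormedAddCommGroup U] [MeasurableSpace U]
    (X0 Xf : Set X) (Xu : Set (X × U))
    (C : Set (X × U)) (f : X × U → X) (D : Set (X × U)) (g : X × U → X)
    (φ : ℝ × ℕ → X) (υ : ℝ × ℕ → U) (E : Set (ℝ × ℕ)) : Prop :=
  IsSolutionPair C f D g φ υ E ∧ φ (0, 0) ∈ X0 ∧
  ∃ (T : ℝ) (J : ℕ), (T, J) ∈ E ∧ φ (T, J) ∈ Xf ∧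
    ∀ (t : ℝ) (j : ℕ), (t, j) ∈ E → t + (j : ℝ) ≤ T + (J : ℝ) →
      (φ (t, j), υ (t, j)) ∉ Xu

/-- Truncation of a hybrid time domain up to hybrid time `(T, J)`. -/
def TruncDom (E : Set (ℝ × ℕ)) (T : ℝ) (J : ℕ) : Set (ℝ × ℕ) :=
  E ∩ (Set.Icc (0 : ℝ) T ×ˢ {j : ℕ | j ≤ J})

/-- The `δ`-inflation of a set `S ⊆ X × U`:
`{(x,u) : ∃ (y,v) ∈ S, x ∈ y + δB, u ∈ v + δB}` with `B` the closed unit ball. -/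
def Inflate {X U : Type*} [NormedAddCommGroup X] [NormedAddCommGroup U]
    (S : Set (X × U)) (δ : ℝ) : Set (X × U) :=
  {p | ∃ q ∈ S, ‖p.1 - q.1‖ ≤ δ ∧ ‖p.2 - q.2‖ ≤ δ}

/-- `δs` is a safety clearance of the motion plan `(φ, υ)` (with `(T,J) = max dom`). -/
def HasSafetyClearance {X U : Type*} [NormedAddCommGroup X] [NormedAddCommGroup U]
    (X0 Xf : Set X) (Xu : Set (X × U))
    (φ : ℝ × ℕ → X) (υ : ℝ × ℕ → U) (E : Set (ℝ × ℕ)) (T : ℝ) (J : ℕ)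
    (δs : ℝ) : Prop :=
  0 < δs ∧ ∀ δ' ∈ Set.Icc (0 : ℝ) δs,
    closedBall (φ (0, 0)) δ' ⊆ X0 ∧
    closedBall (φ (T, J)) δ' ⊆ Xf ∧
    ∀ p ∈ E, Disjoint (closedBall (φ p) δ' ×ˢ closedBall (υ p) δ') Xu

/-- `δd` is a dynamics clearance of the motion plan `(φ, υ)` relative to flow set `C`
and jump set `D`. -/
def HasDynamicsClearance {X U : Type*} [NormedAddCommGroup X] [NormedAddCommGroup U]
    (C D : Set (X × U))
    (φ : ℝ × ℕ → X) (υ : ℝ × ℕ → U) (E : Set (ℝ × ℕ)) (δd : ℝ) : Prop :=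
  0 < δd ∧ ∀ δ' ∈ Set.Icc (0 : ℝ) δd,
    (∀ p ∈ E, (interior (Slice E p.2)).Nonempty →
      closedBall (φ p) δ' ×ˢ closedBall (υ p) δ' ⊆ C) ∧
    ∀ p : ℝ × ℕ, p ∈ E → (p.1, p.2 + 1) ∈ E →
      closedBall (φ p) δ' ×ˢ closedBall (υ p) δ' ⊆ D

/-- The hybrid time domain `E` is purely continuous: nontrivial and contained in `ℝ≥0 × {0}`. -/
def IsPurelyContinuous (E : Set (ℝ × ℕ)) : Prop :=
  E.Nontrivial ∧ E ⊆ {p : ℝ × ℕ | p.2 = 0}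

/-- The hybrid time domain `E` is purely discrete: nontrivial and contained in `{0} × ℕ`. -/
def IsPurelyDiscrete (E : Set (ℝ × ℕ)) : Prop :=
  E.Nontrivial ∧ E ⊆ {p : ℝ × ℕ | p.1 = 0}

/-- Two hybrid arcs are `(τ, ε)`-close. -/
def CloseArcs {Y : Type*} [NormedAddCommGroup Y] (τ ε : ℝ)
    (φ1 : ℝ × ℕ → Y) (E1 : Set (ℝ × ℕ)) (φ2 : ℝ × ℕ → Y) (E2 : Set (ℝ × ℕ)) : Prop :=
  (∀ p ∈ E1, p.1 + (p.2 : ℝ) ≤ τ →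
    ∃ s : ℝ, (s, p.2) ∈ E2 ∧ |p.1 - s| < ε ∧ ‖φ1 p - φ2 (s, p.2)‖ < ε) ∧
  (∀ p ∈ E2, p.1 + (p.2 : ℝ) ≤ τ →
    ∃ s : ℝ, (s, p.2) ∈ E1 ∧ |p.1 - s| < ε ∧ ‖φ2 p - φ1 (s, p.2)‖ < ε)

/-- Auxiliary: slices of a hybrid time domain are order-connected. -/
lemma slice_ordConnected {E : Set (ℝ × ℕ)} (hE : IsHybridTimeDomain E) (j : ℕ) :
    (Slice E j).OrdConnected := by
  constructor
  intro t1 h1 t2 h2 z hz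
  obtain ⟨hnn, hstr⟩ := hE
  obtain ⟨t, _, htend, _, heq⟩ := hstr (t2, j) h2
  have h1' : (t1, j) ∈ E ∩ (Set.Icc (0 : ℝ) t2 ×ˢ {k : ℕ | k ≤ j}) :=
    ⟨h1, ⟨⟨hnn _ h1, le_trans hz.1 hz.2⟩, le_refl j⟩⟩
  rw [heq] at h1'
  simp only [Set.mem_iUnion, Set.mem_prod, Set.mem_singleton_iff, Set.mem_Iic] at h1'
  obtain ⟨k, hk, hmem, hkj⟩ := h1'
  cases hkj
  dsimp only at htend heq hmem
  have hz' : (z, j) ∈ E ∩ (Set.Icc (0 : ℝ) t2 ×ˢ {k : ℕ | k ≤ j}) := by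
    rw [heq]
    simp only [Set.mem_iUnion, Set.mem_prod, Set.mem_singleton_iff, Set.mem_Iic]
    exact ⟨j, le_refl j, ⟨le_trans hmem.1 hz.1, le_of_le_of_eq hz.2 htend.symm⟩, rfl⟩
  exact hz'.1

/-- Auxiliary: the part of an order-connected set of reals outside its interior is null. -/
lemma ordConnected_diff_interior_null {S : Set ℝ} (h : S.OrdConnected) :
    volume (S \ interior S) = 0 := by
  have hc : Convex ℝ S := convex_iff_ordConnected.mpr h
  refine measure_mono_null ?_ (hc.addHaar_frontier volume)
  exact diff_subset_diff subset_closure (le_refl _)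

/-- Auxiliary: an order-connected set of reals with empty interior is null. -/
lemma ordConnected_null_of_interior_empty {S : Set ℝ} (h : S.OrdConnected)
    (hi : ¬ (interior S).Nonempty) : volume S = 0 := by
  have : S \ interior S = S := by
    rw [Set.not_nonempty_iff_eq_empty] at hi
    simp [hi]
  rw [← this]
  exact ordConnected_diff_interior_null h

/-- the concatenation of two solution pairs satisfies the flow differential
equation almost everywhere on every slice of its domain with nonempty interior. -/
theorem concat_solutionPair_flow_ode
    {n m : ℕ}
    {C D : Set (EuclideanSpace ℝ (Fin n) × EuclideanSpace ℝ (Fin m))}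
    {f g : EuclideanSpace ℝ (Fin n) × EuclideanSpace ℝ (Fin m) → EuclideanSpace ℝ (Fin n)}
    {E1 E2 : Set (ℝ × ℕ)}
    {φ1 φ2 φ : ℝ × ℕ → EuclideanSpace ℝ (Fin n)}
    {υ1 υ2 υ : ℝ × ℕ → EuclideanSpace ℝ (Fin m)}
    (h1 : IsSolutionPair C f D g φ1 υ1 E1)
    (h2 : IsSolutionPair C f D g φ2 υ2 E2)
    (hcompact : IsCompact E1)
    {T : ℝ} {J : ℕ} (hmax : IsMaxOfDomain E1 T J)
    (hφ : IsConcatOf T J E1 E2 φ1 φ2 φ)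
    (hυ : IsConcatOf T J E1 E2 υ1 υ2 υ) :
    ∀ j : ℕ, (interior (Slice (ConcatDom T J E1 E2) j)).Nonempty →
      ∀ᵐ t ∂(volume : Measure ℝ), t ∈ Slice (ConcatDom T J E1 E2) j →
        HasDerivAt (fun s => φ (s, j)) (f (φ (t, j), υ (t, j))) t := by
  intro j _
  -- Part A: a.e. on the slice of E1
  have hA : ∀ᵐ t ∂(volume : Measure ℝ), t ∈ Slice E1 j →
      HasDerivAt (fun s => φ (s, j)) (f (φ (t, j), υ (t, j))) t := by
    have hoc : (Slice E1 j).OrdConnected := slice_ordConnected h1.1.1 j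
    by_cases hi : (interior (Slice E1 j)).Nonempty
    · have hODE := (h1.2.2.2.1 j hi).2
      have hnull : volume (Slice E1 j \ interior (Slice E1 j)) = 0 :=
        ordConnected_diff_interior_null hoc
      have hT : ∀ᵐ t ∂(volume : Measure ℝ), t ∉ ({T} : Set ℝ) :=
        measure_eq_zero_iff_ae_notMem.mp (measure_singleton T)
      filter_upwards [hODE, measure_eq_zero_iff_ae_notMem.mp hnull, hT] with t h1t h2t h3t ht
      have hti : t ∈ interior (Slice E1 j) := by
        by_contra h
        exact h2t ⟨ht, h⟩
      have h3t' : t ≠ T := by simpa using h3t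
      have hne : (t, j) ≠ (T, J) := fun h => h3t' (congrArg Prod.fst h)
      have hφeq : φ (t, j) = φ1 (t, j) := hφ.1 _ ht hne
      have hυeq : υ (t, j) = υ1 (t, j) := hυ.1 _ ht hne
      have hev : (fun s => φ (s, j)) =ᶠ[nhds t] (fun s => φ1 (s, j)) := by
        have hU : (interior (Slice E1 j) ∩ {T}ᶜ) ∈ nhds t :=
          (isOpen_interior.inter isClosed_singleton.isOpen_compl).mem_nhds ⟨hti, h3t⟩
        filter_upwards [hU] with s hs
        have hsm : s ∈ Slice E1 j := interior_subset hs.1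
        exact hφ.1 (s, j) hsm (fun h => hs.2 (by simpa using congrArg Prod.fst h))
      rw [hφeq, hυeq]
      exact (h1t ht).congr_of_eventuallyEq hev
    · have hz : volume (Slice E1 j) = 0 := ordConnected_null_of_interior_empty hoc hi
      filter_upwards [measure_eq_zero_iff_ae_notMem.mp hz] with t ht hmem
      exact absurd hmem ht
  -- Part B: a.e. on the translated slice of E2
  have hB : ∀ᵐ t ∂(volume : Measure ℝ), ∀ p : ℝ × ℕ, p ∈ E2 →
      (p.1 + T, p.2 + J) = (t, j) →
      HasDerivAt (fun s => φ (s, j)) (f (φ (t, j), υ (t, j))) t := by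
    by_cases hjJ : J ≤ j
    · set j' := j - J with hj'def
      have hj'J : j' + J = j := Nat.sub_add_cancel hjJ
      have hoc : (Slice E2 j').OrdConnected := slice_ordConnected h2.1.1 j'
      by_cases hi : (interior (Slice E2 j')).Nonempty
      · have hODE := (h2.2.2.2.1 j' hi).2
        have hnull : volume (Slice E2 j' \ interior (Slice E2 j')) = 0 :=
          ordConnected_diff_interior_null hoc
        have hae2 : ∀ᵐ t' ∂(volume : Measure ℝ), t' ∈ Slice E2 j' →
            t' ∈ interior (Slice E2 j') ∧
            HasDerivAt (fun s => φ2 (s, j')) (f (φ2 (t', j'), υ2 (t', j'))) t' := by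
          filter_upwards [hODE, measure_eq_zero_iff_ae_notMem.mp hnull] with t' h1' h2' ht'
          exact ⟨by by_contra h; exact h2' ⟨ht', h⟩, h1' ht'⟩
        have htrans := (measurePreserving_sub_right (volume : Measure ℝ)
          T).quasiMeasurePreserving.ae hae2
        filter_upwards [htrans] with t htr p hp heq
        have hp2 : p.2 = j' := by
          have := congrArg Prod.snd heq
          simp only at this
          omega
        have hp1 : p.1 = t - T := by
          have := congrArg Prod.fst heq
          simp only at this
          linarith
        have hmem : t - T ∈ Slice E2 j' := by
          have : p = (t - T, j') := Prod.ext hp1 hp2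
          rw [this] at hp
          exact hp
        obtain ⟨hint, hder⟩ := htr hmem
        have hφeq : φ (t, j) = φ2 (t - T, j') := by
          have h := hφ.2 (t - T, j') hmem
          simpa [hj'J] using h
        have hυeq : υ (t, j) = υ2 (t - T, j') := by
          have h := hυ.2 (t - T, j') hmem
          simpa [hj'J] using h
        have hinner : HasDerivAt (fun s : ℝ => s - T) 1 t := (hasDerivAt_id t).sub_const T
        have hcomp : HasDerivAt (fun s => φ2 (s - T, j'))
            (f (φ2 (t - T, j'), υ2 (t - T, j'))) t := by
          have h := HasDerivAt.scomp t hder hinner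
          rw [one_smul] at h
          exact h
        have hev : (fun s => φ (s, j)) =ᶠ[nhds t] (fun s => φ2 (s - T, j')) := by
          have hcont : Continuous (fun s : ℝ => s - T) := continuous_id.sub continuous_const
          have hU : ((fun s : ℝ => s - T) ⁻¹' interior (Slice E2 j')) ∈ nhds t :=
            (isOpen_interior.preimage hcont).mem_nhds hint
          filter_upwards [hU] with s hs
          have hm : s - T ∈ Slice E2 j' := interior_subset hs
          have h := hφ.2 (s - T, j') hm
          simpa [hj'J] using h
        rw [hφeq, hυeq]
        exact hcomp.congr_of_eventuallyEq hev
      · have hz : volume (Slice E2 j') = 0 := ordConnected_null_of_interior_empty hoc hi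
        have hz' : ∀ᵐ t ∂(volume : Measure ℝ), t - T ∉ Slice E2 j' :=
          (measurePreserving_sub_right (volume : Measure ℝ)
            T).quasiMeasurePreserving.ae (measure_eq_zero_iff_ae_notMem.mp hz)
        filter_upwards [hz'] with t ht p hp heq
        exfalso
        have hp2 : p.2 = j' := by
          have := congrArg Prod.snd heq
          simp only at this
          omega
        have hp1 : p.1 = t - T := by
          have := congrArg Prod.fst heq
          simp only at this
          linarith
        apply ht
        have : p = (t - T, j') := Prod.ext hp1 hp2
        rw [this] at hp
        exact hp
    · filter_upwards with t p hp heq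
      exfalso
      have := congrArg Prod.snd heq
      simp only at this
      omega
  filter_upwards [hA, hB] with t hAt hBt ht
  rcases ht with h | h
  · exact hAt h
  · obtain ⟨p, hp, heq⟩ := h
    exact hBt p hp heq
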